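/- arXiv:1609.01579 — 2 statements merged into one kernel-verified Lean document; each statement's English description precedes it below -/
import Mathlib

section
/- Let ε > 0, f ∈ C¹([0,ε)) and η, ξ, ρ ∈ C⁰([0,ε)) with η(t) > 0 and ξ(t) ≥ 0 for all t, max{f(t), ρ(t)} ≥ 0 for all t, f(0) = 0, and f'(t)·η(t) ≤ ∫₀ᵗ f(s)ξ(s) ds + f(t)ρ(t) for all t ∈ [0,ε). Then f(t) ≤ 0 for all t ∈ [0,ε). -/
open Set MeasureTheory intervalIntegral

/-- Calculus comparison lemma (Lemma 3.2): if `f ∈ C¹([0,ε))`, `η, ξ, ρ ∈ C⁰([0,ε))`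
with `η > 0`, `ξ ≥ 0`, `max {f, ρ} ≥ 0`, `f 0 = 0`, and
`f'(t) η(t) ≤ ∫₀ᵗ f ξ + f(t) ρ(t)` on `[0,ε)`, then `f ≤ 0` on `[0,ε)`. -/
theorem stmt_0 (ε : ℝ) (hε : 0 < ε) (f f' η ξ ρ : ℝ → ℝ)
    (hf : ∀ t ∈ Ico (0:ℝ) ε, HasDerivWithinAt f (f' t) (Ico (0:ℝ) ε) t)
    (hf' : ContinuousOn f' (Ico (0:ℝ) ε))
    (hη : ContinuousOn η (Ico (0:ℝ) ε))
    (hξ : ContinuousOn ξ (Ico (0:ℝ) ε))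
    (hρ : ContinuousOn ρ (Ico (0:ℝ) ε))
    (hηpos : ∀ t ∈ Ico (0:ℝ) ε, 0 < η t)
    (hξnn : ∀ t ∈ Ico (0:ℝ) ε, 0 ≤ ξ t)
    (hmax : ∀ t ∈ Ico (0:ℝ) ε, 0 ≤ max (f t) (ρ t))
    (hf0 : f 0 = 0)
    (hineq : ∀ t ∈ Ico (0:ℝ) ε,
      f' t * η t ≤ (∫ s in (0:ℝ)..t, f s * ξ s) + f t * ρ t) :
    ∀ t ∈ Ico (0:ℝ) ε, f t ≤ 0 := by
  intro t₀ ht₀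
  obtain ⟨ht₀0, ht₀ε⟩ := ht₀
  set b : ℝ := (t₀ + ε) / 2 with hbdef
  have hbε : b < ε := by simp only [hbdef]; linarith
  have ht₀b : t₀ ≤ b := by simp only [hbdef]; linarith
  have hb0 : 0 ≤ b := le_trans ht₀0 ht₀b
  have hIcc : Icc (0:ℝ) b ⊆ Ico 0 ε := fun x hx => ⟨hx.1, lt_of_le_of_lt hx.2 hbε⟩
  have hfc : ContinuousOn f (Ico 0 ε) := fun x hx => (hf x hx).continuousWithinAt
  -- clamp to [0, b]
  set c : ℝ → ℝ := fun s => max 0 (min s b) with hcdef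
  have hccont : Continuous c := continuous_const.max (continuous_id.min continuous_const)
  have hcmem : ∀ s, c s ∈ Icc (0:ℝ) b := fun s =>
    ⟨le_max_left _ _, max_le hb0 (min_le_right _ _)⟩
  have hceq : ∀ s ∈ Icc (0:ℝ) b, c s = s := by
    intro s hs
    simp only [hcdef]
    rw [min_eq_left hs.2, max_eq_right hs.1]
  -- continuous extension of f⁺
  set g : ℝ → ℝ := fun s => max (f (c s)) 0 with hgdef
  have hgcont : Continuous g := by
    apply Continuous.max _ continuous_const
    exact (hfc.mono hIcc).comp_continuous hccont hcmem
  have hgeq : ∀ s ∈ Icc (0:ℝ) b, g s = max (f s) 0 := by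
    intro s hs; simp only [hgdef, hceq s hs]
  have hgnn : ∀ s, 0 ≤ g s := fun s => le_max_right _ _
  have hgle : ∀ s ∈ Icc (0:ℝ) b, f s ≤ g s := by
    intro s hs; rw [hgeq s hs]; exact le_max_left _ _
  set w : ℝ → ℝ := fun t => ∫ s in (0:ℝ)..t, g s with hwdef
  have hw' : ∀ t, HasDerivAt w (g t) t := fun t =>
    (hgcont.integral_hasStrictDerivAt 0 t).hasDerivAt
  have hwcont : Continuous w := by
    have : Differentiable ℝ w := fun t => (hw' t).differentiableAt
    exact this.continuous
  have hwmono : ∀ s t : ℝ, s ≤ t → w s ≤ w t := by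
    intro s t hst
    have h1 : IntervalIntegrable g volume 0 s := hgcont.intervalIntegrable _ _
    have h2 : IntervalIntegrable g volume s t := hgcont.intervalIntegrable _ _
    have := intervalIntegral.integral_add_adjacent_intervals h1 h2
    have hnn : 0 ≤ ∫ x in s..t, g x :=
      intervalIntegral.integral_nonneg hst (fun x _ => hgnn x)
    simp only [hwdef]
    rw [← this]; linarith
  have hw0 : w 0 = 0 := intervalIntegral.integral_same
  have hwnn : ∀ t, 0 ≤ t → 0 ≤ w t := by
    intro t ht; rw [← hw0]; exact hwmono 0 t ht
  -- compactness bounds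
  have hne : (Icc (0:ℝ) b).Nonempty := ⟨0, le_refl _, hb0⟩
  obtain ⟨xm, hxm, hmin⟩ := isCompact_Icc.exists_isMinOn hne (hη.mono hIcc)
  set m : ℝ := η xm with hmdef
  have hm : 0 < m := hηpos xm (hIcc hxm)
  have hmle : ∀ s ∈ Icc (0:ℝ) b, m ≤ η s := fun s hs => hmin hs
  obtain ⟨xK, hxK, hKmax⟩ := isCompact_Icc.exists_isMaxOn hne (hξ.mono hIcc)
  set K : ℝ := ξ xK with hKdef
  have hK : 0 ≤ K := hξnn xK (hIcc hxK)
  have hKle : ∀ s ∈ Icc (0:ℝ) b, ξ s ≤ K := fun s hs => hKmax hs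
  have hρpcont : ContinuousOn (fun s => max (ρ s) 0) (Icc 0 b) :=
    fun x hx => ((hρ.mono hIcc) x hx).max continuousWithinAt_const
  obtain ⟨xR, hxR, hRmax⟩ := isCompact_Icc.exists_isMaxOn hne hρpcont
  set R : ℝ := max (ρ xR) 0 with hRdef
  have hR : 0 ≤ R := le_max_right _ _
  have hRle : ∀ s ∈ Icc (0:ℝ) b, max (ρ s) 0 ≤ R := fun s hs => hRmax hs
  -- pointwise bound on f'
  have hf'bd : ∀ s ∈ Icc (0:ℝ) b, f' s ≤ (K * w s + R * g s) / m := by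
    intro s hs
    have hsε : s ∈ Ico (0:ℝ) ε := hIcc hs
    have h1 : (∫ x in (0:ℝ)..s, f x * ξ x) ≤ K * w s := by
      have hI1 : IntervalIntegrable (fun x => f x * ξ x) volume 0 s := by
        apply ContinuousOn.intervalIntegrable
        rw [uIcc_of_le hs.1]
        exact ((hfc.mono hIcc).mul (hξ.mono hIcc)).mono (Icc_subset_Icc le_rfl hs.2)
      have hI2 : IntervalIntegrable (fun x => K * g x) volume 0 s :=
        (continuous_const.mul hgcont).intervalIntegrable _ _
      have hle : ∀ x ∈ Icc (0:ℝ) s, f x * ξ x ≤ K * g x := by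
        intro x hx
        have hxb : x ∈ Icc (0:ℝ) b := ⟨hx.1, le_trans hx.2 hs.2⟩
        have h2 : f x * ξ x ≤ g x * ξ x :=
          mul_le_mul_of_nonneg_right (hgle x hxb) (hξnn x (hIcc hxb))
        have h3 : g x * ξ x ≤ g x * K :=
          mul_le_mul_of_nonneg_left (hKle x hxb) (hgnn x)
        linarith [h2, h3]
      calc (∫ x in (0:ℝ)..s, f x * ξ x) ≤ ∫ x in (0:ℝ)..s, K * g x :=
            intervalIntegral.integral_mono_on hs.1 hI1 hI2 hle
        _ = K * w s := by rw [hwdef]; exact intervalIntegral.integral_const_mul K g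
    have h2 : f s * ρ s ≤ R * g s := by
      rcases le_or_gt (f s) 0 with hfs | hfs
      · have h0 : f s * ρ s ≤ 0 := by
          rcases max_cases (f s) (ρ s) with ⟨heq, _⟩ | ⟨heq, _⟩
          · have hfeq : f s = 0 := le_antisymm hfs (heq ▸ hmax s hsε)
            simp [hfeq]
          · have hρs : 0 ≤ ρ s := heq ▸ hmax s hsε
            exact mul_nonpos_of_nonpos_of_nonneg hfs hρs
        exact le_trans h0 (mul_nonneg hR (hgnn s))
      · have hgs : g s = f s := by
          rw [hgeq s hs, max_eq_left (le_of_lt hfs)]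
        have hρR : ρ s ≤ R := le_trans (le_max_left _ _) (hRle s hs)
        calc f s * ρ s ≤ f s * R := mul_le_mul_of_nonneg_left hρR (le_of_lt hfs)
          _ = R * g s := by rw [hgs]; ring
    have hmain : f' s * η s ≤ K * w s + R * g s := le_trans (hineq s hsε) (by linarith)
    have hrhs : 0 ≤ K * w s + R * g s := by
      have := mul_nonneg hK (hwnn s hs.1)
      have := mul_nonneg hR (hgnn s)
      linarith
    rw [le_div_iff₀ hm]
    rcases le_or_gt (f' s) 0 with h | h
    · exact le_trans (mul_nonpos_of_nonpos_of_nonneg h (le_of_lt hm)) hrhs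
    · calc f' s * m ≤ f' s * η s :=
            mul_le_mul_of_nonneg_left (hmle s hs) (le_of_lt h)
        _ ≤ _ := hmain
  -- integrate: f t ≤ C' * w t
  set C' : ℝ := (K * b + R) / m with hC'def
  have hC' : 0 ≤ C' := by
    apply div_nonneg _ (le_of_lt hm)
    have := mul_nonneg hK hb0
    linarith
  have hfle : ∀ t ∈ Icc (0:ℝ) b, f t ≤ C' * w t := by
    intro t ht
    have hftc : (∫ s in (0:ℝ)..t, f' s) = f t - f 0 := by
      apply intervalIntegral.integral_eq_sub_of_hasDeriv_right_of_le ht.1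
      · exact (hfc.mono hIcc).mono (Icc_subset_Icc le_rfl ht.2)
      · intro x hx
        have hxmem : x ∈ Ico (0:ℝ) ε := ⟨le_of_lt hx.1, lt_trans hx.2 (lt_of_le_of_lt ht.2 hbε)⟩
        have hnhds : Ico (0:ℝ) ε ∈ nhds x :=
          Ico_mem_nhds (hx.1) hxmem.2
        exact ((hf x hxmem).hasDerivAt hnhds).hasDerivWithinAt
      · apply ContinuousOn.intervalIntegrable
        rw [uIcc_of_le ht.1]
        exact hf'.mono fun y hy => ⟨hy.1, lt_of_le_of_lt hy.2 (lt_of_le_of_lt ht.2 hbε)⟩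
    have hfint : IntervalIntegrable f' volume 0 t := by
      apply ContinuousOn.intervalIntegrable
      rw [uIcc_of_le ht.1]
      exact hf'.mono fun y hy => ⟨hy.1, lt_of_le_of_lt hy.2 (lt_of_le_of_lt ht.2 hbε)⟩
    have hbint : IntervalIntegrable (fun s => (K * w s + R * g s) / m) volume 0 t := by
      apply Continuous.intervalIntegrable
      exact (((continuous_const.mul hwcont).add (continuous_const.mul hgcont)).div_const m)
    have h1 : f t = ∫ s in (0:ℝ)..t, f' s := by rw [hftc, hf0]; ring
    have h2 : (∫ s in (0:ℝ)..t, f' s) ≤ ∫ s in (0:ℝ)..t, (K * w s + R * g s) / m := by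
      apply intervalIntegral.integral_mono_on ht.1 hfint hbint
      intro x hx
      exact hf'bd x ⟨hx.1, le_trans hx.2 ht.2⟩
    have h3 : (∫ s in (0:ℝ)..t, (K * w s + R * g s) / m)
        = (K * (∫ s in (0:ℝ)..t, w s) + R * w t) / m := by
      have hwint : IntervalIntegrable w volume 0 t := hwcont.intervalIntegrable _ _
      have hgint : IntervalIntegrable g volume 0 t := hgcont.intervalIntegrable _ _
      rw [intervalIntegral.integral_div]
      congr 1
      rw [intervalIntegral.integral_add (f := fun x => K * w x) (g := fun x => R * g x) ((continuous_const.mul hwcont).intervalIntegrable _ _)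
        ((continuous_const.mul hgcont).intervalIntegrable _ _),
        intervalIntegral.integral_const_mul, intervalIntegral.integral_const_mul]
    have h4 : (∫ s in (0:ℝ)..t, w s) ≤ t * w t := by
      have : (∫ s in (0:ℝ)..t, w s) ≤ ∫ _s in (0:ℝ)..t, w t := by
        apply intervalIntegral.integral_mono_on ht.1 (hwcont.intervalIntegrable _ _)
          (intervalIntegrable_const)
        intro x hx
        exact hwmono x t hx.2
      simpa using this
    have h5 : (K * (∫ s in (0:ℝ)..t, w s) + R * w t) / m ≤ C' * w t := by
      rw [hC'def, div_mul_eq_mul_div, div_le_div_iff_of_pos_right hm]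
      have hwt : 0 ≤ w t := hwnn t ht.1
      have htw : t * w t ≤ b * w t := mul_le_mul_of_nonneg_right ht.2 hwt
      nlinarith [mul_le_mul_of_nonneg_left h4 hK, mul_le_mul_of_nonneg_left htw hK]
    linarith [h1.le, h2, h3.le, h5, h3.ge]
  -- Grönwall: w ≡ 0 on [0,b]
  have hgron : ∀ x ∈ Icc (0:ℝ) b, ‖w x‖ ≤ gronwallBound 0 C' 0 (x - 0) := by
    apply norm_le_gronwallBound_of_norm_deriv_right_le hwcont.continuousOn
      (fun x _ => (hw' x).hasDerivWithinAt)
    · simp [hw0]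
    · intro x hx
      have hxb : x ∈ Icc (0:ℝ) b := ⟨hx.1, le_of_lt hx.2⟩
      have h1 : g x ≤ C' * w x := by
        rw [hgeq x hxb]
        exact max_le (hfle x hxb) (mul_nonneg hC' (hwnn x hx.1))
      rw [Real.norm_eq_abs, Real.norm_eq_abs, abs_of_nonneg (hgnn x),
        abs_of_nonneg (hwnn x hx.1)]
      linarith
  have hwt₀ : w t₀ = 0 := by
    have := hgron t₀ ⟨ht₀0, ht₀b⟩
    rw [gronwallBound_ε0] at this
    simp only [Real.norm_eq_abs] at this
    have : |w t₀| ≤ 0 := by simpa using this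
    have := abs_nonneg (w t₀)
    have habs : |w t₀| = 0 := le_antisymm ‹|w t₀| ≤ 0› ‹0 ≤ |w t₀|›
    exact abs_eq_zero.mp habs
  have := hfle t₀ ⟨ht₀0, ht₀b⟩
  rw [hwt₀] at this
  linarith
end

section
/- Let ε > 0 and suppose f ∈ C¹([0,ε)), η, ξ, ρ ∈ C⁰([0,ε)) satisfy η > 0, ξ ≥ 0, max{f, ρ} ≥ 0 pointwise, f(0) = 0, and f'(t)η(t) ≤ ∫₀ᵗ f(s)ξ(s) ds + f(t)ρ(t) for all t. Then there exists δ ∈ (0,ε) such that f ≤ 0 on [0,δ]; more precisely, if C > 0 bounds both (1/η(t))∫₀ᵗ ξ(s)ds and ρ(t)/η(t) on [0,ε/2], then f ≤ 0 on [0,δ] for any δ ∈ (0,ε/2] with 2Cδ < 1. -/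
open Set MeasureTheory intervalIntegral

/-- Claim 1 in the proof of Lemma 3.2 (short-time version): if `C > 0` bounds both
`(1/η(t)) ∫₀ᵗ ξ` and `ρ(t)/η(t)` on `[0,ε/2]`, then `f ≤ 0` on `[0,δ]` for any
`δ ∈ (0,ε/2]` with `2Cδ < 1`; in particular there exists `δ ∈ (0,ε)` with `f ≤ 0` on `[0,δ]`. -/
theorem stmt_2 (ε : ℝ) (hε : 0 < ε) (f f' η ξ ρ : ℝ → ℝ)
    (hf : ∀ t ∈ Ico (0:ℝ) ε, HasDerivWithinAt f (f' t) (Ico (0:ℝ) ε) t)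
    (hf' : ContinuousOn f' (Ico (0:ℝ) ε))
    (hη : ContinuousOn η (Ico (0:ℝ) ε))
    (hξ : ContinuousOn ξ (Ico (0:ℝ) ε))
    (hρ : ContinuousOn ρ (Ico (0:ℝ) ε))
    (hηpos : ∀ t ∈ Ico (0:ℝ) ε, 0 < η t)
    (hξnn : ∀ t ∈ Ico (0:ℝ) ε, 0 ≤ ξ t)
    (hmax : ∀ t ∈ Ico (0:ℝ) ε, 0 ≤ max (f t) (ρ t))
    (hf0 : f 0 = 0)
    (hineq : ∀ t ∈ Ico (0:ℝ) ε,
      f' t * η t ≤ (∫ s in (0:ℝ)..t, f s * ξ s) + f t * ρ t)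
    (C : ℝ) (hC : 0 < C)
    (hCbound : ∀ t ∈ Icc (0:ℝ) (ε/2),
      (1 / η t) * (∫ s in (0:ℝ)..t, ξ s) ≤ C ∧ ρ t / η t ≤ C) :
    (∀ δ, 0 < δ → δ ≤ ε/2 → 2 * C * δ < 1 → ∀ t ∈ Icc (0:ℝ) δ, f t ≤ 0) ∧
      ∃ δ ∈ Ioo (0:ℝ) ε, ∀ t ∈ Icc (0:ℝ) δ, f t ≤ 0 := by
  have key : ∀ δ, 0 < δ → δ ≤ ε/2 → 2 * C * δ < 1 → ∀ t ∈ Icc (0:ℝ) δ, f t ≤ 0 := by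
    intro δ hδ0 hδε hCδ
    have hsub : Icc (0:ℝ) δ ⊆ Ico 0 ε := fun x hx =>
      ⟨hx.1, lt_of_le_of_lt (hx.2.trans hδε) (by linarith)⟩
    have hfc : ContinuousOn f (Icc 0 δ) := fun x hx =>
      ((hf x (hsub hx)).continuousWithinAt).mono hsub
    obtain ⟨t₀, ht₀, hmx⟩ := isCompact_Icc.exists_isMaxOn (nonempty_Icc.2 hδ0.le) hfc
    set M := f t₀ with hM
    intro t ht
    by_contra hpos
    push_neg at hpos
    have hMpos : 0 < M := lt_of_lt_of_le hpos (hmx ht)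
    -- derivative bound
    have hderiv_bound : ∀ s ∈ Icc (0:ℝ) δ, f' s ≤ 2 * C * M := by
      intro s hs
      have hsε : s ∈ Ico (0:ℝ) ε := hsub hs
      have hηs : 0 < η s := hηpos s hsε
      have hs2 : s ∈ Icc (0:ℝ) (ε/2) := ⟨hs.1, hs.2.trans hδε⟩
      obtain ⟨hC1, hC2⟩ := hCbound s hs2
      have hξint : (∫ u in (0:ℝ)..s, ξ u) ≤ C * η s := by
        rw [one_div, inv_mul_le_iff₀ hηs] at hC1
        nlinarith
      have hρle : ρ s ≤ C * η s := by
        rw [div_le_iff₀ hηs] at hC2; linarith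
      have hIccs : Icc (0:ℝ) s ⊆ Ico 0 ε := fun x hx =>
        hsub ⟨hx.1, hx.2.trans hs.2⟩
      have huIcc : uIcc (0:ℝ) s = Icc 0 s := uIcc_of_le hs.1
      have hint1 : IntervalIntegrable (fun u => f u * ξ u) volume 0 s := by
        apply ContinuousOn.intervalIntegrable
        rw [huIcc]
        exact ((hfc.mono (Icc_subset_Icc_right hs.2)).mul (hξ.mono hIccs))
      have hint2 : IntervalIntegrable (fun u => M * ξ u) volume 0 s := by
        apply ContinuousOn.intervalIntegrable
        rw [huIcc]
        exact (continuousOn_const.mul (hξ.mono hIccs))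
      have hI : (∫ u in (0:ℝ)..s, f u * ξ u) ≤ M * (∫ u in (0:ℝ)..s, ξ u) := by
        rw [← intervalIntegral.integral_const_mul]
        apply intervalIntegral.integral_mono_on hs.1 hint1 hint2
        intro u hu
        exact mul_le_mul_of_nonneg_right
          (hmx ⟨hu.1, hu.2.trans hs.2⟩) (hξnn u (hIccs hu))
      have hI2 : (∫ u in (0:ℝ)..s, f u * ξ u) ≤ M * (C * η s) :=
        hI.trans (mul_le_mul_of_nonneg_left hξint hMpos.le)
      have hfsρ : f s * ρ s ≤ M * (C * η s) := by
        rcases le_or_gt 0 (ρ s) with hρs | hρs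
        · calc f s * ρ s ≤ M * ρ s := mul_le_mul_of_nonneg_right (hmx hs) hρs
            _ ≤ M * (C * η s) := mul_le_mul_of_nonneg_left hρle hMpos.le
        · have hfs : 0 ≤ f s := by
            have := hmax s hsε
            rcases le_total (f s) (ρ s) with h | h
            · simp [max_eq_right h] at this; linarith
            · simpa [max_eq_left h] using this
          have : f s * ρ s ≤ 0 := mul_nonpos_of_nonneg_of_nonpos hfs hρs.le
          nlinarith [mul_pos hMpos (mul_pos hC hηs)]
      have h1 := hineq s hsε
      nlinarith
    -- FTC
    have ht₀ε : t₀ < ε := lt_of_le_of_lt (ht₀.2.trans hδε) (by linarith)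
    have hf'int : IntervalIntegrable f' volume 0 t₀ := by
      apply ContinuousOn.intervalIntegrable
      rw [uIcc_of_le ht₀.1]
      exact hf'.mono fun x hx => hsub ⟨hx.1, hx.2.trans ht₀.2⟩
    have hFTC : (∫ u in (0:ℝ)..t₀, f' u) = f t₀ - f 0 := by
      apply intervalIntegral.integral_eq_sub_of_hasDeriv_right_of_le ht₀.1
        (hfc.mono (Icc_subset_Icc_right ht₀.2)) _ hf'int
      intro x hx
      have hxε : x ∈ Ico (0:ℝ) ε := ⟨hx.1.le, lt_trans hx.2 ht₀ε⟩
      exact ((hf x hxε).hasDerivAt (Ico_mem_nhds hx.1 hxε.2)).hasDerivWithinAt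
    have hIle : (∫ u in (0:ℝ)..t₀, f' u) ≤ 2 * C * M * t₀ := by
      have : (∫ u in (0:ℝ)..t₀, f' u) ≤ ∫ u in (0:ℝ)..t₀, 2 * C * M := by
        apply intervalIntegral.integral_mono_on ht₀.1 hf'int intervalIntegrable_const
        intro u hu
        exact hderiv_bound u ⟨hu.1, hu.2.trans ht₀.2⟩
      rwa [intervalIntegral.integral_const, smul_eq_mul, sub_zero, mul_comm] at this
    have hMt : M ≤ 2 * C * M * t₀ := by
      rw [hFTC, hf0, sub_zero] at hIle; exact hIle
    have h2CMpos : 0 ≤ 2 * C * M := by positivity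
    nlinarith [mul_le_mul_of_nonneg_left ht₀.2 h2CMpos]
  refine ⟨key, min (ε/2) (1/(4*C)), ⟨?_, ?_⟩, ?_⟩
  · exact lt_min (by linarith) (by positivity)
  · exact lt_of_le_of_lt (min_le_left _ _) (by linarith)
  · apply key _ (lt_min (by linarith) (by positivity)) (min_le_left _ _)
    calc 2 * C * min (ε/2) (1/(4*C)) ≤ 2 * C * (1/(4*C)) := by
          apply mul_le_mul_of_nonneg_left (min_le_right _ _) (by positivity)
      _ = 1/2 := by field_simp; ring
      _ < 1 := by norm_num
end
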